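/- For every α in the Lipschitz order R and β = α(1 − i − j − k), the norm of β is congruent to 4 times the real part of β modulo 8. -/

import Mathlib

open Quaternion

def oneMinusIJK : ℍ[ℤ] := ⟨1, -1, -1, -1⟩

lemma sq_sub_even (x : ℤ) : 2 ∣ (x * x - x) := by
  rcases Int.even_or_odd x with ⟨k, hk⟩ | ⟨k, hk⟩ <;> subst hk <;> ring_nf <;> omega

theorem stmt_3 (α β : ℍ[ℤ]) (hβ : β = α * oneMinusIJK) :
    Quaternion.normSq β ≡ 4 * β.re [ZMOD 8] := by
  obtain ⟨a, b, c, d⟩ := α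
  subst hβ
  simp only [Quaternion.normSq_def', oneMinusIJK, Quaternion.re_mul, Quaternion.imI_mul,
    Quaternion.imJ_mul, Quaternion.imK_mul]
  erw [Quaternion.re_mul, Quaternion.imI_mul, Quaternion.imJ_mul, Quaternion.imK_mul]
  obtain ⟨p, hp⟩ := sq_sub_even a
  obtain ⟨q, hq⟩ := sq_sub_even b
  obtain ⟨r, hr⟩ := sq_sub_even c
  obtain ⟨s, hs⟩ := sq_sub_even d
  have h8 : (8:ℤ) ∣ ((a * 1 - b * -1 - c * -1 - d * -1) ^ 2 + (a * -1 + b * 1 + c * -1 - d * -1) ^ 2 +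
          (a * -1 - b * -1 + c * 1 + d * -1) ^ 2 +
        (a * -1 + b * -1 - c * -1 + d * 1) ^ 2 - 4 * (a * 1 - b * -1 - c * -1 - d * -1)) := by
    exact ⟨p + q + r + s, by nlinarith [hp, hq, hr, hs]⟩
  exact (Int.ModEq.symm (Int.modEq_iff_dvd.mpr h8))
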